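/- If a rational matrix R over k(x) is the sum R1 + R2 of two rational matrices, then for every nonnegative integer ℓ, the ℓ-th determinantal denominator φ_ℓ(R) divides the product φ_ℓ(R1)·φ_ℓ(R2). -/

import Mathlib

open Polynomial

noncomputable section

/-- Normalization on a field: every nonzero element normalizes to `1`. -/
noncomputable def fieldNormalizationMonoid (K : Type*) [Field K] : NormalizationMonoid K := by
  classical
  exact
  { normUnit := fun a => if h : a = 0 then 1 else (Units.mk0 a h)⁻¹
    normUnit_zero := dif_pos rfl
    normUnit_one := by
      rw [dif_neg one_ne_zero]
      exact Units.ext (by simp)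
    normUnit_mul_units := fun {a} u ha => by
      rw [dif_neg (mul_ne_zero ha u.ne_zero), dif_neg ha]
      exact Units.ext (by simp [mul_comm]) }

attribute [local instance] fieldNormalizationMonoid

noncomputable local instance (K : Type*) [Field K] : NormalizedGCDMonoid (Polynomial K) :=
  UniqueFactorizationMonoid.toNormalizedGCDMonoid _

variable {k : Type*} [Field k] [CharZero k]

/-- The ℓ-th determinantal denominator of a rational matrix: the monic least common
denominator of all minors of size at most ℓ. -/
def detDen {n p : ℕ} (R : Matrix (Fin n) (Fin p) (RatFunc k)) (ℓ : ℕ) : Polynomial k :=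
  (Finset.range (ℓ + 1)).lcm fun i =>
    (Finset.univ : Finset ((Fin i ↪ Fin n) × (Fin i ↪ Fin p))).lcm fun fg =>
      (Matrix.det fun a b => R (fg.1 a) (fg.2 b)).denom

open Equiv Equiv.Perm


/-- Inner sum over a coset: sum over `Perm (Fin j) × Perm (Fin r)` of signed products
equals the signed product of two minors. -/
private lemma inner_coset_sum {R : Type*} [CommRing R] {j r : ℕ}
    (M : Matrix (Fin j ⊕ Fin r) (Fin j ⊕ Fin r) R) (τ : Perm (Fin j ⊕ Fin r)) :
    (∑ pr : Perm (Fin j) × Perm (Fin r),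
        ((sign (τ * sumCongrHom _ _ pr) : ℤ) : R) * ∏ i, M ((τ * sumCongrHom _ _ pr) i) i)
      = ((sign τ : ℤ) : R) *
        (Matrix.det (M.submatrix (fun a => τ (Sum.inl a)) Sum.inl)
          * Matrix.det (M.submatrix (fun a => τ (Sum.inr a)) Sum.inr)) := by
  rw [Fintype.sum_prod_type, Matrix.det_apply, Matrix.det_apply, Finset.sum_mul_sum,
    Finset.mul_sum]
  refine Finset.sum_congr rfl fun π _ => ?_
  rw [Finset.mul_sum]
  refine Finset.sum_congr rfl fun ρ _ => ?_
  have hs : sign (τ * sumCongrHom _ _ (π, ρ)) = sign τ * (sign π * sign ρ) := by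
    rw [Equiv.Perm.sign_mul, Equiv.Perm.sumCongrHom_apply, Equiv.Perm.sign_sumCongr]
  rw [hs, Fintype.prod_sum_type]
  simp only [Equiv.Perm.mul_apply, Equiv.Perm.sumCongrHom_apply, Equiv.sumCongr_apply,
    Sum.map_inl, Sum.map_inr, Matrix.submatrix_apply, Units.smul_def, zsmul_eq_mul,
    Units.val_mul, Int.cast_mul]
  ring

private lemma det_split_mem' {R : Type*} [CommRing R] (S : Subring R) {j r : ℕ}
    (M : Matrix (Fin j ⊕ Fin r) (Fin j ⊕ Fin r) R) (q1 q2 : R)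
    (h1 : ∀ e : Fin j → Fin j ⊕ Fin r, Function.Injective e →
      q1 * Matrix.det (M.submatrix e Sum.inl) ∈ S)
    (h2 : ∀ e : Fin r → Fin j ⊕ Fin r, Function.Injective e →
      q2 * Matrix.det (M.submatrix e Sum.inr) ∈ S) :
    q1 * q2 * M.det ∈ S := by
  classical
  set G := Perm (Fin j ⊕ Fin r)
  set H : Subgroup G := (sumCongrHom (Fin j) (Fin r)).range with hH
  letI : Fintype (G ⧸ H) := Fintype.ofFinite _
  let F : (G ⧸ H) × (Perm (Fin j) × Perm (Fin r)) → G := fun x => x.1.out * sumCongrHom _ _ x.2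
  have hF : Function.Bijective F := by
    constructor
    · rintro ⟨q, pr⟩ ⟨q', pr'⟩ h
      have hq : q = q' := by
        have h2 := congrArg (QuotientGroup.mk (s := H)) h
        rwa [QuotientGroup.mk_mul_of_mem _ (MonoidHom.mem_range.mpr ⟨pr, rfl⟩),
          QuotientGroup.mk_mul_of_mem _ (MonoidHom.mem_range.mpr ⟨pr', rfl⟩),
          QuotientGroup.out_eq', QuotientGroup.out_eq'] at h2
      subst hq
      have h3 : sumCongrHom _ _ pr = sumCongrHom _ _ pr' := mul_left_cancel h
      exact Prod.ext rfl (sumCongrHom_injective h3)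
    · intro σ
      have hm : ((QuotientGroup.mk σ : G ⧸ H)).out⁻¹ * σ ∈ H := by
        apply QuotientGroup.eq.mp
        rw [QuotientGroup.out_eq']
      obtain ⟨pr, hpr⟩ := hm
      exact ⟨⟨QuotientGroup.mk σ, pr⟩, by simp only [F, hpr]; exact mul_inv_cancel_left _ _⟩
  have key : M.det = ∑ x : (G ⧸ H) × (Perm (Fin j) × Perm (Fin r)),
      ((sign (F x) : ℤ) : R) * ∏ i, M (F x i) i := by
    rw [Matrix.det_apply]
    rw [Fintype.sum_bijective F hF _ (fun σ => ((sign σ : ℤ) : R) * ∏ i, M (σ i) i)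
      (fun x => rfl)]
    refine Finset.sum_congr rfl fun σ _ => ?_
    rw [Units.smul_def, zsmul_eq_mul]
  rw [key, Fintype.sum_prod_type, Finset.mul_sum]
  refine S.sum_mem fun q _ => ?_
  have := inner_coset_sum M q.out
  simp only [F]
  rw [this]
  have hA := h1 (fun a => q.out (Sum.inl a)) (q.out.injective.comp Sum.inl_injective)
  have hB := h2 (fun a => q.out (Sum.inr a)) (q.out.injective.comp Sum.inr_injective)
  have heq : q1 * q2 * (((sign q.out : ℤ) : R) *
      (Matrix.det (M.submatrix (fun a => q.out (Sum.inl a)) Sum.inl)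
        * Matrix.det (M.submatrix (fun a => q.out (Sum.inr a)) Sum.inr)))
      = ((sign q.out : ℤ) : R) *
        ((q1 * Matrix.det (M.submatrix (fun a => q.out (Sum.inl a)) Sum.inl))
          * (q2 * Matrix.det (M.submatrix (fun a => q.out (Sum.inr a)) Sum.inr))) := by ring
  rw [heq]
  exact S.mul_mem (intCast_mem S _) (S.mul_mem hA hB)

private lemma det_split_mem {R : Type*} [CommRing R] (S : Subring R) {j r : ℕ}
    (M : Matrix (Fin j ⊕ Fin r) (Fin j ⊕ Fin r) R) (q1 q2 : R)
    (h1 : ∀ f : Fin j → Fin j ⊕ Fin r, Function.Injective f →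
      q1 * Matrix.det (M.submatrix Sum.inl f) ∈ S)
    (h2 : ∀ f : Fin r → Fin j ⊕ Fin r, Function.Injective f →
      q2 * Matrix.det (M.submatrix Sum.inr f) ∈ S) :
    q1 * q2 * M.det ∈ S := by
  rw [← Matrix.det_transpose M]
  refine det_split_mem' S M.transpose q1 q2 (fun e he => ?_) (fun e he => ?_)
  · rw [← Matrix.transpose_submatrix, Matrix.det_transpose]
    exact h1 e he
  · rw [← Matrix.transpose_submatrix, Matrix.det_transpose]
    exact h2 e he


private lemma det_piecewise_mem {R : Type*} [CommRing R] (S : Subring R) {i : ℕ}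
    (A B : Matrix (Fin i) (Fin i) R) (s : Finset (Fin i)) (q1 q2 : R)
    (h1 : ∀ (j : ℕ) (e f : Fin j ↪ Fin i), q1 * Matrix.det (A.submatrix e f) ∈ S)
    (h2 : ∀ (j : ℕ) (e f : Fin j ↪ Fin i), q2 * Matrix.det (B.submatrix e f) ∈ S) :
    q1 * q2 * Matrix.det (Matrix.of (s.piecewise A B)) ∈ S := by
  classical
  let e1 : Fin s.card ≃ {x // x ∈ s} := (s.orderIsoOfFin rfl).toEquiv
  let e2 : Fin sᶜ.card ≃ {x // x ∈ sᶜ} := (sᶜ.orderIsoOfFin rfl).toEquiv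
  let e3 : {x // x ∈ sᶜ} ≃ {x // ¬ x ∈ s} := Equiv.subtypeEquivRight fun x => Finset.mem_compl
  let e : Fin s.card ⊕ Fin sᶜ.card ≃ Fin i :=
    (Equiv.sumCongr e1 (e2.trans e3)).trans (Equiv.sumCompl (· ∈ s))
  have he1 : ∀ a, e (Sum.inl a) ∈ s := fun a => (e1 a).2
  have he2 : ∀ b, e (Sum.inr b) ∉ s := fun b => (e3 (e2 b)).2
  rw [← Matrix.det_submatrix_equiv_self e]
  refine det_split_mem S _ q1 q2 (fun f hf => ?_) (fun f hf => ?_)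
  · have hM : ((Matrix.of (s.piecewise A B)).submatrix e e).submatrix Sum.inl f
        = A.submatrix (⟨fun a => e (Sum.inl a), e.injective.comp Sum.inl_injective⟩ : Fin s.card ↪ Fin i)
            (⟨fun b => e (f b), e.injective.comp hf⟩ : Fin s.card ↪ Fin i) := by
      ext a b
      simp only [Matrix.submatrix_apply, Matrix.of_apply, Function.Embedding.coeFn_mk]
      exact congrFun (s.piecewise_eq_of_mem A B (he1 a)) _
    rw [hM]
    exact h1 _ _ _
  · have hM : ((Matrix.of (s.piecewise A B)).submatrix e e).submatrix Sum.inr f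
        = B.submatrix (⟨fun a => e (Sum.inr a), e.injective.comp Sum.inr_injective⟩ : Fin sᶜ.card ↪ Fin i)
            (⟨fun b => e (f b), e.injective.comp hf⟩ : Fin sᶜ.card ↪ Fin i) := by
      ext a b
      simp only [Matrix.submatrix_apply, Matrix.of_apply, Function.Embedding.coeFn_mk]
      exact congrFun (s.piecewise_eq_of_notMem A B (he2 a)) _
    rw [hM]
    exact h2 _ _ _

private lemma det_add_mem {R : Type*} [CommRing R] (S : Subring R) {i : ℕ}
    (A B : Matrix (Fin i) (Fin i) R) (q1 q2 : R)
    (h1 : ∀ (j : ℕ) (e f : Fin j ↪ Fin i), q1 * Matrix.det (A.submatrix e f) ∈ S)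
    (h2 : ∀ (j : ℕ) (e f : Fin j ↪ Fin i), q2 * Matrix.det (B.submatrix e f) ∈ S) :
    q1 * q2 * Matrix.det (A + B) ∈ S := by
  classical
  have hdet : Matrix.det (A + B)
      = ∑ s : Finset (Fin i), Matrix.det (Matrix.of (s.piecewise A B)) :=
    (Matrix.detRowAlternating (R := R) (n := Fin i)).toMultilinearMap.map_add_univ A B
  rw [hdet, Finset.mul_sum]
  exact S.sum_mem fun s _ => det_piecewise_mem S A B s q1 q2 h1 h2


private lemma detDen_ne_zero {n p : ℕ} (R : Matrix (Fin n) (Fin p) (RatFunc k)) (ℓ : ℕ) :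
    detDen R ℓ ≠ 0 := by
  intro h
  unfold detDen at h
  obtain ⟨i, _, hi⟩ := Finset.lcm_eq_zero_iff.mp h
  obtain ⟨fg, _, hfg⟩ := Finset.lcm_eq_zero_iff.mp hi
  exact RatFunc.denom_ne_zero _ hfg

private lemma minor_clear {n p : ℕ} (R1 : Matrix (Fin n) (Fin p) (RatFunc k)) (ℓ i : ℕ)
    (hi : i ≤ ℓ) (fg : (Fin i ↪ Fin n) × (Fin i ↪ Fin p)) {j : ℕ} (e f : Fin j ↪ Fin i) :
    algebraMap (Polynomial k) (RatFunc k) (detDen R1 ℓ) *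
      Matrix.det (Matrix.submatrix (Matrix.of fun a b => R1 (fg.1 a) (fg.2 b)) e f)
      ∈ (algebraMap (Polynomial k) (RatFunc k)).range := by
  have hj : j ≤ ℓ := le_trans (by simpa using Fintype.card_le_of_embedding e) hi
  have hsub : Matrix.submatrix (Matrix.of fun a b => R1 (fg.1 a) (fg.2 b)) e f
      = fun a b => R1 ((e.trans fg.1) a) ((f.trans fg.2) b) := rfl
  have hdvd : (Matrix.det fun a b => R1 ((e.trans fg.1) a) ((f.trans fg.2) b)).denom
      ∣ detDen R1 ℓ := by
    refine dvd_trans ?_ (Finset.dvd_lcm (Finset.mem_range.mpr (Nat.lt_succ_of_le hj)))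
    have := Finset.dvd_lcm (s := Finset.univ) (f := fun fg : (Fin j ↪ Fin n) × (Fin j ↪ Fin p) =>
        (Matrix.det fun a b => R1 (fg.1 a) (fg.2 b)).denom)
      (Finset.mem_univ ((e.trans fg.1, f.trans fg.2) : (Fin j ↪ Fin n) × (Fin j ↪ Fin p)))
    dsimp only at this
    exact this
  have hq : detDen R1 ℓ ≠ 0 := detDen_ne_zero _ _
  obtain ⟨pp, hpp⟩ := (RatFunc.denom_dvd hq).mp hdvd
  rw [hsub, hpp]
  refine ⟨pp, ?_⟩
  rw [mul_div_cancel₀ _ (RatFunc.algebraMap_ne_zero hq)]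

/-- If `R = R1 + R2`, then for every `ℓ`, `φ_ℓ(R) ∣ φ_ℓ(R1) * φ_ℓ(R2)`. -/
theorem detDen_add_dvd {n p : ℕ} (R R1 R2 : Matrix (Fin n) (Fin p) (RatFunc k))
    (hR : R = R1 + R2) (ℓ : ℕ) :
    detDen R ℓ ∣ detDen R1 ℓ * detDen R2 ℓ := by
  classical
  subst hR
  have hq1 : detDen R1 ℓ ≠ 0 := detDen_ne_zero _ _
  have hq2 : detDen R2 ℓ ≠ 0 := detDen_ne_zero _ _
  refine Finset.lcm_dvd fun i hi => Finset.lcm_dvd fun fg _ => ?_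
  rw [RatFunc.denom_dvd (mul_ne_zero hq1 hq2)]
  have hi' : i ≤ ℓ := Nat.lt_succ_iff.mp (Finset.mem_range.mp hi)
  have hmem : algebraMap (Polynomial k) (RatFunc k) (detDen R1 ℓ * detDen R2 ℓ) *
      Matrix.det (fun a b => (R1 + R2) (fg.1 a) (fg.2 b)) ∈
      (algebraMap (Polynomial k) (RatFunc k)).range := by
    rw [map_mul]
    have hsplit : (fun a b => (R1 + R2) (fg.1 a) (fg.2 b) : Matrix (Fin i) (Fin i) _) =
        (fun a b => R1 (fg.1 a) (fg.2 b) : Matrix (Fin i) (Fin i) _)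
          + (fun a b => R2 (fg.1 a) (fg.2 b) : Matrix (Fin i) (Fin i) _) := rfl
    rw [hsplit]
    exact det_add_mem _ _ _ _ _ (fun j e f => minor_clear R1 ℓ i hi' fg e f)
      (fun j e f => minor_clear R2 ℓ i hi' fg e f)
  obtain ⟨p, hp⟩ := hmem
  refine ⟨p, ?_⟩
  rw [eq_div_iff (RatFunc.algebraMap_ne_zero (mul_ne_zero hq1 hq2)), mul_comm, hp]
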